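/- In the planar Kepler problem with ℓ ≠ 0 and E ≠ 0, define I' = (k/(-E))·(r/|r|) and let I be the reflection of I' in the line through r in direction p (the tangent line at the point r). Then I = A/E, independently of the point on the orbit; in particular I is a constant of the motion. -/

import Mathlib

/-- Reflection of the point `Q` in the affine line through `x` with direction `u`. -/
noncomputable def reflectInLine (x u Q : EuclideanSpace ℝ (Fin 2)) :
    EuclideanSpace ℝ (Fin 2) :=
  x + (2 * ((inner ℝ (Q - x) u : ℝ) / ‖u‖ ^ 2)) • u - (Q - x)

/-- The vHH construction: reflecting `I' = (k/(-E)) r/‖r‖` in the tangent line at the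
point `r` (the line through `r` in direction `p`) gives the fixed point `I = A/E`,
independently of the point of the orbit. -/
theorem reflected_point_is_fixed (k : ℝ) (r p : EuclideanSpace ℝ (Fin 2)) (hr : r ≠ 0)
    (hp : p ≠ 0)
    (ℓ : ℝ) (hℓdef : ℓ = r 0 * p 1 - r 1 * p 0) (hℓ : ℓ ≠ 0)
    (E : ℝ) (hE : E = ‖p‖ ^ 2 / 2 - k / ‖r‖) (hEne : E ≠ 0)
    (A : EuclideanSpace ℝ (Fin 2))
    (hA : A = ‖p‖ ^ 2 • r - (inner ℝ r p : ℝ) • p - (k / ‖r‖) • r)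
    (I' : EuclideanSpace ℝ (Fin 2)) (hI' : I' = (k / (-E) / ‖r‖) • r) :
    reflectInLine r p I' = E⁻¹ • A := by
  have hR : ‖r‖ ≠ 0 := norm_ne_zero_iff.mpr hr
  have hP : ‖p‖ ≠ 0 := norm_ne_zero_iff.mpr hp
  subst hI' hA
  unfold reflectInLine
  have hinner : (inner ℝ ((k / (-E) / ‖r‖) • r - r) p : ℝ)
      = (k / (-E) / ‖r‖ - 1) * (inner ℝ r p : ℝ) := by
    rw [inner_sub_left, real_inner_smul_left]; ring
  rw [hinner]
  have hP2 : ‖p‖ ^ 2 = 2 * E + 2 * (k / ‖r‖) := by rw [hE]; ring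
  have hne : 2 * E + 2 * (k / ‖r‖) ≠ 0 := hP2 ▸ pow_ne_zero 2 hP
  have hD : k + E * ‖r‖ ≠ 0 := by
    have h2 : 2 * E + 2 * (k / ‖r‖) = 2 * (k + E * ‖r‖) / ‖r‖ := by field_simp; ring
    intro h
    apply hne
    rw [h2, h]
    simp
  have hD2 : -(k * E * ‖r‖ * 2) - E ^ 2 * ‖r‖ ^ 2 * 2 ≠ 0 := by
    have h3 : -(k * E * ‖r‖ * 2) - E ^ 2 * ‖r‖ ^ 2 * 2 = (-2 * E * ‖r‖) * (k + E * ‖r‖) := by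
      ring
    rw [h3]
    exact mul_ne_zero (by simp [hEne, hR]) hD
  have hcoef : 2 * ((k / -E / ‖r‖ - 1) * (inner ℝ r p : ℝ) / ‖p‖ ^ 2)
      = -((inner ℝ r p : ℝ) / E) := by
    rw [mul_div_assoc', ← neg_div E (inner ℝ r p : ℝ),
      div_eq_div_iff (pow_ne_zero 2 hP) hEne, hP2]
    field_simp
    ring
  rw [hcoef]
  ext i
  simp only [PiLp.add_apply, PiLp.sub_apply, PiLp.smul_apply, smul_eq_mul]
  rw [hP2]
  field_simp [hD2]
  ring
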